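/- arXiv:1807.07457 — 3 statements merged into one kernel-verified Lean document; each statement's English description precedes it below -/
import Mathlib

section
/- Let λ be a partition of n and t a standard skew tableau with target [m+1, m+n]. Then t equals the minimal tableau m + τ_{λ/μ} of its shape if and only if t has no strong descents, i.e., D(t) = WD(t). -/
/-- Partial sum `λ₁ + ⋯ + λ_k` of a 1-indexed sequence of parts. -/
def psum (lam : ℕ → ℕ) (k : ℕ) : ℕ := ∑ i ∈ Finset.Icc 1 k, lam i

/-- `lam` is a composition of `n` (1-indexed parts, extended by zeros). -/
def IsComp (n : ℕ) (lam : ℕ → ℕ) : Prop :=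
  lam 0 = 0 ∧ ∃ N, (∀ i, N < i → lam i = 0) ∧ psum lam N = n

/-- `lam` is a partition of `n` (weakly decreasing parts). -/
def IsPartition (n : ℕ) (lam : ℕ → ℕ) : Prop :=
  IsComp n lam ∧ ∀ i j, 1 ≤ i → i ≤ j → lam j ≤ lam i

/-- Dominance order in the paper's (column) convention: `lam` dominates `mu`
(written `mu ≤ lam`) iff every partial sum of `lam` is at most the
corresponding partial sum of `mu`. -/
def Dominates (lam mu : ℕ → ℕ) : Prop := ∀ k, psum lam k ≤ psum mu k

/-- Row index of the box containing the entry `k`. -/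
def rowT (p : ℕ → ℕ × ℕ) (k : ℕ) : ℕ := (p k).1
/-- Column index of the box containing the entry `k`. -/
def colT (p : ℕ → ℕ × ℕ) (k : ℕ) : ℕ := (p k).2

/-- `p` is the position function of a bijective filling of the skew diagram
`[lam] ∖ [mu]` (1-indexed rows and columns, `lam j` boxes in column `j`)
by the entries `a+1, …, a+n`. -/
def IsSkewTab (lam mu : ℕ → ℕ) (a n : ℕ) (p : ℕ → ℕ × ℕ) : Prop :=
  (∀ k ∈ Finset.Icc (a+1) (a+n),
      1 ≤ (p k).2 ∧ mu (p k).2 < (p k).1 ∧ (p k).1 ≤ lam (p k).2) ∧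
  (∀ k ∈ Finset.Icc (a+1) (a+n), ∀ l ∈ Finset.Icc (a+1) (a+n), p k = p l → k = l) ∧
  (∀ c : ℕ × ℕ, 1 ≤ c.2 → mu c.2 < c.1 → c.1 ≤ lam c.2 →
      ∃ k ∈ Finset.Icc (a+1) (a+n), p k = c)

/-- A straight-shape `lam`-tableau with entries `1, …, n`. -/
def IsTab (lam : ℕ → ℕ) (n : ℕ) (p : ℕ → ℕ × ℕ) : Prop :=
  IsSkewTab lam (fun _ => 0) 0 n p

/-- Entries increase down each column. -/
def ColStd (a n : ℕ) (p : ℕ → ℕ × ℕ) : Prop :=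
  ∀ k ∈ Finset.Icc (a+1) (a+n), ∀ l ∈ Finset.Icc (a+1) (a+n),
    colT p k = colT p l → rowT p k < rowT p l → k < l

/-- Entries increase along each row. -/
def RowStd (a n : ℕ) (p : ℕ → ℕ × ℕ) : Prop :=
  ∀ k ∈ Finset.Icc (a+1) (a+n), ∀ l ∈ Finset.Icc (a+1) (a+n),
    rowT p k = rowT p l → colT p k < colT p l → k < l

/-- Standard skew tableau of shape `lam/mu` with entries `a+1, …, a+n`. -/
def IsStdSkew (lam mu : ℕ → ℕ) (a n : ℕ) (p : ℕ → ℕ × ℕ) : Prop :=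
  IsSkewTab lam mu a n p ∧ ColStd a n p ∧ RowStd a n p

/-- Standard `lam`-tableau with entries `1, …, n`. -/
def IsStd (lam : ℕ → ℕ) (n : ℕ) (p : ℕ → ℕ × ℕ) : Prop :=
  IsStdSkew lam (fun _ => 0) 0 n p

/-- Column standard straight-shape `lam`-tableau. -/
def IsColStdTab (lam : ℕ → ℕ) (n : ℕ) (p : ℕ → ℕ × ℕ) : Prop :=
  IsTab lam n p ∧ ColStd 0 n p

/-- `i ∈ D(p)`: a descent, `col(i) ≥ col(i+1)`. -/
def inD (a n : ℕ) (p : ℕ → ℕ × ℕ) (i : ℕ) : Prop :=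
  a + 1 ≤ i ∧ i + 1 ≤ a + n ∧ colT p (i+1) ≤ colT p i
/-- `i ∈ SD(p)`: a strong descent, `col(i) > col(i+1)`. -/
def inSD (a n : ℕ) (p : ℕ → ℕ × ℕ) (i : ℕ) : Prop :=
  a + 1 ≤ i ∧ i + 1 ≤ a + n ∧ colT p (i+1) < colT p i
/-- `i ∈ WD(p)`: a weak descent, `col(i) = col(i+1)`. -/
def inWD (a n : ℕ) (p : ℕ → ℕ × ℕ) (i : ℕ) : Prop :=
  a + 1 ≤ i ∧ i + 1 ≤ a + n ∧ colT p (i+1) = colT p i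
/-- `i ∈ A(p)`: an ascent, `col(i) < col(i+1)`. -/
def inA (a n : ℕ) (p : ℕ → ℕ × ℕ) (i : ℕ) : Prop :=
  a + 1 ≤ i ∧ i + 1 ≤ a + n ∧ colT p i < colT p (i+1)
/-- `i ∈ SA(p)`: a strong ascent, `row(i) > row(i+1)`. -/
def inSA (a n : ℕ) (p : ℕ → ℕ × ℕ) (i : ℕ) : Prop :=
  a + 1 ≤ i ∧ i + 1 ≤ a + n ∧ rowT p (i+1) < rowT p i

/-- Descent set of a tableau with entries `1, …, n`. -/
def Dset (n : ℕ) (p : ℕ → ℕ × ℕ) : Set ℕ := {i | inD 0 n p i}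

/-- Shape of the restriction of `p` to entries `≤ m`: the number of boxes
of column `j` occupied by entries `≤ m`. -/
def resShape (p : ℕ → ℕ × ℕ) (m j : ℕ) : ℕ :=
  ((Finset.Icc 1 m).filter (fun k => colT p k = j)).card

/-- Extended dominance order on standard tableaux with `n` boxes: `u ≤ t`. -/
def ExtDomLe (n : ℕ) (pu pt : ℕ → ℕ × ℕ) : Prop :=
  ∀ m ∈ Finset.Icc 1 n, Dominates (fun j => resShape pt m j) (fun j => resShape pu m j)

/-- `i` is the restriction number of `(u,t)`: the restrictions to entries `≤ i`
agree, and `i` is maximal with this property. -/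
def RestNum (n : ℕ) (pu pt : ℕ → ℕ × ℕ) (i : ℕ) : Prop :=
  i ≤ n ∧ (∀ k, 1 ≤ k → k ≤ i → pu k = pt k) ∧ (i = n ∨ pu (i+1) ≠ pt (i+1))

/-- `(u,t)` is favourable with restriction number `i`:
`i` lies in the symmetric difference `D(u) ⊕ D(t)`. -/
def Favourable (n : ℕ) (pu pt : ℕ → ℕ × ℕ) (i : ℕ) : Prop :=
  RestNum n pu pt i ∧
    ((inD 0 n pu i ∧ ¬ inD 0 n pt i) ∨ (inD 0 n pt i ∧ ¬ inD 0 n pu i))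

/-- Dual Knuth move of the first kind of index `k` from `u` to `t`,
on standard tableaux of shape `lam`:  `t = s_k u` with
`D(u) ∩ {k-1,k} = {k-1}` and `D(t) ∩ {k-1,k} = {k}`. -/
def DK1 (lam : ℕ → ℕ) (n : ℕ) (pu pt : ℕ → ℕ × ℕ) (k : ℕ) : Prop :=
  IsStd lam n pu ∧ IsStd lam n pt ∧ 2 ≤ k ∧
  (∀ m, pt m = pu (Equiv.swap k (k+1) m)) ∧
  inD 0 n pu (k-1) ∧ ¬ inD 0 n pu k ∧ inD 0 n pt k ∧ ¬ inD 0 n pt (k-1)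

/-- Dual Knuth move of the second kind of index `k` from `u` to `t`:
`t = s_k u` with `D(u) ∩ {k,k+1} = {k+1}` and `D(t) ∩ {k,k+1} = {k}`. -/
def DK2 (lam : ℕ → ℕ) (n : ℕ) (pu pt : ℕ → ℕ × ℕ) (k : ℕ) : Prop :=
  IsStd lam n pu ∧ IsStd lam n pt ∧ k + 2 ≤ n ∧
  (∀ m, pt m = pu (Equiv.swap k (k+1) m)) ∧
  inD 0 n pu (k+1) ∧ ¬ inD 0 n pu k ∧ inD 0 n pt k ∧ ¬ inD 0 n pt (k+1)

/-- A dual Knuth move (of either kind) of index `k` from `u` to `t`. -/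
def DKMove (lam : ℕ → ℕ) (n : ℕ) (pu pt : ℕ → ℕ × ℕ) (k : ℕ) : Prop :=
  DK1 lam n pu pt k ∨ DK2 lam n pu pt k

/-- A paired dual Knuth move: a dual Knuth move of the same kind and the same
index applied simultaneously to both components of a pair. -/
def PairedDKMove (mu lam : ℕ → ℕ) (n : ℕ)
    (a b : (ℕ → ℕ × ℕ) × (ℕ → ℕ × ℕ)) : Prop :=
  ∃ k, (DK1 mu n a.1 b.1 k ∧ DK1 lam n a.2 b.2 k) ∨
       (DK2 mu n a.1 b.1 k ∧ DK2 lam n a.2 b.2 k)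

/-- Paired dual Knuth equivalence: the equivalence relation generated by
paired dual Knuth moves. -/
def PairedDKEquiv (mu lam : ℕ → ℕ) (n : ℕ)
    (a b : (ℕ → ℕ × ℕ) × (ℕ → ℕ × ℕ)) : Prop :=
  Relation.ReflTransGen
    (fun x y => PairedDKMove mu lam n x y ∨ PairedDKMove mu lam n y x) a b

/-- Lexicographic order on same-shape column standard tableaux: `u <_lex t`. -/
def LexLT (n : ℕ) (pu pt : ℕ → ℕ × ℕ) : Prop :=
  ∃ l, 1 ≤ l ∧ l ≤ n ∧ colT pt l < colT pu l ∧
    ∀ m, l < m → m ≤ n → colT pt m = colT pu m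

/-- `w` is a permutation of `[1,n]`, fixing all other natural numbers. -/
def IsPermOf (n : ℕ) (w : ℕ → ℕ) : Prop :=
  (∀ k ∈ Finset.Icc 1 n, w k ∈ Finset.Icc 1 n) ∧
  (∀ k ∈ Finset.Icc 1 n, ∀ l ∈ Finset.Icc 1 n, w k = w l → k = l) ∧
  (∀ k, k ∉ Finset.Icc 1 n → w k = k)

/-- The Coxeter length of `w ∈ S_n`: the number of inversions. -/
def lenInv (n : ℕ) (w : ℕ → ℕ) : ℕ :=
  ((Finset.Icc 1 n ×ˢ Finset.Icc 1 n).filter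
    (fun q => q.1 < q.2 ∧ w q.2 < w q.1)).card

/-- One step of the Bruhat order on `S_n`: `y = (i j) ∘ x` (so `y x⁻¹` is a
reflection) with `l(x) < l(y)`. -/
def BruhatStep (n : ℕ) (x y : ℕ → ℕ) : Prop :=
  lenInv n x < lenInv n y ∧
  ∃ i j, 1 ≤ i ∧ i < j ∧ j ≤ n ∧ ∀ k, y k = Equiv.swap i j (x k)

/-- The Bruhat order on `S_n`. -/
def BruhatLe (n : ℕ) (x y : ℕ → ℕ) : Prop :=
  Relation.ReflTransGen (BruhatStep n) x y

/-- One step of the left weak order on `S_n`: `y = s_i ∘ x` with `l(x) < l(y)`. -/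
def WeakStep (n : ℕ) (x y : ℕ → ℕ) : Prop :=
  lenInv n x < lenInv n y ∧
  ∃ i, 1 ≤ i ∧ i + 1 ≤ n ∧ ∀ k, y k = Equiv.swap i (i+1) (x k)

/-- The left weak order on `S_n`. -/
def WeakLe (n : ℕ) (x y : ℕ → ℕ) : Prop :=
  Relation.ReflTransGen (WeakStep n) x y

/-- `ptau` is (the position function of) the column superstandard tableau
`τ_lam`: column standard, with the columns filled in order from left to right. -/
def IsSuperstandard (lam : ℕ → ℕ) (n : ℕ) (ptau : ℕ → ℕ × ℕ) : Prop :=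
  IsTab lam n ptau ∧ ColStd 0 n ptau ∧
  ∀ k, 1 ≤ k → k + 1 ≤ n → colT ptau k ≤ colT ptau (k+1)

/-- `w = perm(t)`, i.e. `w · τ_lam = t`: for each `k`, the box of `τ_lam`
containing `k` contains `w k` in `t`. -/
def IsPermTab (n : ℕ) (ptau pt : ℕ → ℕ × ℕ) (w : ℕ → ℕ) : Prop :=
  IsPermOf n w ∧ ∀ k ∈ Finset.Icc 1 n, pt (w k) = ptau k

/-- `p` (a standard skew tableau of shape `lam/mu` with entries `a+1, …, a+n`)
is the `(a+1)`-critical tableau: writing `m = a+1`, the entry `m` lies in the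
first nonempty column `i` of the skew diagram, `m+1` lies in column `i+1`,
and the restriction to entries `> m+1` is minimal (no strong descents). -/
def IsCritical (lam mu : ℕ → ℕ) (a n : ℕ) (p : ℕ → ℕ × ℕ) : Prop :=
  IsStdSkew lam mu a n p ∧
  (∀ j, 1 ≤ j → j < colT p (a+1) → lam j ≤ mu j) ∧
  mu (colT p (a+1)) < lam (colT p (a+1)) ∧
  colT p (a+2) = colT p (a+1) + 1 ∧
  ∀ i, a + 3 ≤ i → i + 1 ≤ a + n → colT p i ≤ colT p (i+1)

/-- The box `c` is removable from the diagram of `lam`. -/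
def Removable (lam : ℕ → ℕ) (c : ℕ × ℕ) : Prop :=
  1 ≤ c.2 ∧ c.1 = lam c.2 ∧ lam (c.2 + 1) < c.1

/-- One step of a jeu de taquin slide on a filling `p` with entries `1, …, n`:
the hole moves from `b` to `b'`, where `b'` is the box (below or to the right
of `b`) containing the smaller entry `x` among the occupied candidates, and the
filling is updated by moving `x` into `b`. -/
def SlideStep (n : ℕ) (p : ℕ → ℕ × ℕ) (b : ℕ × ℕ)
    (p' : ℕ → ℕ × ℕ) (b' : ℕ × ℕ) : Prop :=
  ∃ x, 1 ≤ x ∧ x ≤ n ∧ p x = b' ∧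
    (b' = (b.1 + 1, b.2) ∨ b' = (b.1, b.2 + 1)) ∧
    (∀ y, 1 ≤ y → y ≤ n → (p y = (b.1 + 1, b.2) ∨ p y = (b.1, b.2 + 1)) → x ≤ y) ∧
    (∀ y, p' y = if y = x then b else p y)

/-- `lam/mu` is a skew partition of `n`. -/
def IsSkewShape (n : ℕ) (lam mu : ℕ → ℕ) : Prop :=
  (∃ m, IsPartition (m + n) lam ∧ IsPartition m mu) ∧ ∀ j, mu j ≤ lam j

lemma aux_box_mem {lam mu : ℕ → ℕ} {a n : ℕ} {p : ℕ → ℕ × ℕ} (h : IsSkewTab lam mu a n p)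
    {k : ℕ} (h1 : a+1 ≤ k) (h2 : k ≤ a+n) :
    1 ≤ colT p k ∧ mu (colT p k) < rowT p k ∧ rowT p k ≤ lam (colT p k) :=
  h.1 k (Finset.mem_Icc.mpr ⟨h1, h2⟩)

lemma aux_box_occ {lam mu : ℕ → ℕ} {a n : ℕ} {p : ℕ → ℕ × ℕ} (h : IsSkewTab lam mu a n p)
    {r c : ℕ} (h1 : 1 ≤ c) (h2 : mu c < r) (h3 : r ≤ lam c) :
    ∃ l, (a+1 ≤ l ∧ l ≤ a+n) ∧ rowT p l = r ∧ colT p l = c := by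
  obtain ⟨l, hl, hpl⟩ := h.2.2 (r, c) h1 h2 h3
  exact ⟨l, Finset.mem_Icc.mp hl, by simp [rowT, hpl], by simp [colT, hpl]⟩

lemma aux_colstd_lt {a n : ℕ} {p : ℕ → ℕ × ℕ} (h : ColStd a n p) {k l : ℕ}
    (hk1 : a+1 ≤ k) (hk2 : k ≤ a+n) (hl1 : a+1 ≤ l) (hl2 : l ≤ a+n)
    (hc : colT p k = colT p l) (hr : rowT p k < rowT p l) : k < l :=
  h k (Finset.mem_Icc.mpr ⟨hk1, hk2⟩) l (Finset.mem_Icc.mpr ⟨hl1, hl2⟩) hc hr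

/-- If there are no strong descents, `colT` is weakly increasing on the range. -/
lemma aux_col_mono {a n : ℕ} {p : ℕ → ℕ × ℕ} (hnsd : ∀ i, ¬ inSD a n p i)
    {i j : ℕ} (hi : a + 1 ≤ i) (hij : i ≤ j) (hj : j ≤ a + n) :
    colT p i ≤ colT p j := by
  induction j, hij using Nat.le_induction with
  | base => exact le_rfl
  | succ j hij ih =>
    have h1 : colT p i ≤ colT p j := ih (by omega)
    have h2 := hnsd j
    simp only [inSD, not_and, not_lt] at h2
    exact h1.trans (h2 (by omega) (by omega))

lemma aux_sum_split (lam mu : ℕ → ℕ) {c c' : ℕ} (h1 : 1 ≤ c) (h2 : c < c')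
    (hz : ∀ h, c < h → h < c' → lam h ≤ mu h) :
    ∑ h ∈ Finset.Ico 1 c', (lam h - mu h)
      = (∑ h ∈ Finset.Ico 1 c, (lam h - mu h)) + (lam c - mu c) := by
  rw [← Finset.sum_Ico_consecutive _ (by omega : 1 ≤ c+1) (by omega : c+1 ≤ c')]
  rw [Finset.sum_Ico_succ_top h1]
  have hzero : ∑ h ∈ Finset.Ico (c+1) c', (lam h - mu h) = 0 :=
    Finset.sum_eq_zero fun h hh => by
      rw [Finset.mem_Ico] at hh
      exact Nat.sub_eq_zero_of_le (hz h (by omega) hh.2)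
  omega

/-- a standard skew tableau with entries `m+1, …, m+n` is the
minimal tableau `m + τ_{lam/mu}` of its shape iff it has no strong descents. -/
theorem minimal_iff_no_strong_descent (n m : ℕ) (lam mu : ℕ → ℕ)
    (hskew : IsSkewShape n lam mu)
    (pt : ℕ → ℕ × ℕ) (ht : IsStdSkew lam mu m n pt) :
    (∀ k ∈ Finset.Icc (m+1) (m+n),
        k = m + (rowT pt k - mu (colT pt k)) +
          ∑ h ∈ Finset.Ico 1 (colT pt k), (lam h - mu h)) ↔
      ∀ i, ¬ inSD m n pt i := by
  obtain ⟨hst, hcs, _hrs⟩ := ht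
  constructor
  · -- forward: minimal tableau has no strong descents
    intro hf i hSD
    obtain ⟨h1, h2, h3⟩ := hSD
    have hbi := aux_box_mem hst h1 (by omega)
    have hbi1 := aux_box_mem hst (show m+1 ≤ i+1 by omega) h2
    have hfi := hf i (Finset.mem_Icc.mpr ⟨h1, by omega⟩)
    have hfi1 := hf (i+1) (Finset.mem_Icc.mpr ⟨by omega, h2⟩)
    set c := colT pt i with hc
    set c' := colT pt (i+1) with hc'
    have hS1 : ∑ h ∈ Finset.Ico 1 (c'+1), (lam h - mu h)
        = (∑ h ∈ Finset.Ico 1 c', (lam h - mu h)) + (lam c' - mu c') :=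
      Finset.sum_Ico_succ_top (by omega) _
    have hS2 : ∑ h ∈ Finset.Ico 1 (c'+1), (lam h - mu h)
        ≤ ∑ h ∈ Finset.Ico 1 c, (lam h - mu h) :=
      Finset.sum_le_sum_of_subset (Finset.Ico_subset_Ico le_rfl (by omega))
    omega
  · -- backward: no strong descents implies minimal
    intro hnsd k hk
    rw [Finset.mem_Icc] at hk
    obtain ⟨hk1, hk2⟩ := hk
    induction k, hk1 using Nat.le_induction with
    | base =>
      -- entry m+1 sits in box (mu c + 1, c) of first nonempty column
      have hb := aux_box_mem hst (le_refl (m+1)) hk2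
      set c := colT pt (m+1) with hc
      -- all earlier columns are empty
      have hz : ∀ h, 1 ≤ h → h < c → lam h ≤ mu h := by
        intro h h1 h2
        by_contra hlt
        obtain ⟨l, ⟨hl1, hl2⟩, _, hlc⟩ :=
          aux_box_occ hst h1 (show mu h < mu h + 1 by omega) (by omega)
        have := aux_col_mono hnsd (le_refl (m+1)) hl1 hl2
        omega
      have hS : ∑ h ∈ Finset.Ico 1 c, (lam h - mu h) = 0 :=
        Finset.sum_eq_zero fun h hh => by
          rw [Finset.mem_Ico] at hh
          exact Nat.sub_eq_zero_of_le (hz h hh.1 hh.2)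
      -- row of m+1 is mu c + 1
      obtain ⟨l, ⟨hl1, hl2⟩, hlr, hlc⟩ :=
        aux_box_occ hst hb.1 (show mu c < mu c + 1 by omega) (by omega)
      have hrow : rowT pt (m+1) = mu c + 1 := by
        rcases lt_trichotomy (rowT pt l) (rowT pt (m+1)) with h | h | h
        · have := aux_colstd_lt hcs hl1 hl2 (le_refl (m+1)) hk2 hlc h
          omega
        · omega
        · omega
      rw [hS, hrow]
      omega
    | succ k hk ih =>
      have ihk : k = m + (rowT pt k - mu (colT pt k)) +
          ∑ h ∈ Finset.Ico 1 (colT pt k), (lam h - mu h) := ih (by omega)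
      have hbk := aux_box_mem hst hk (by omega)
      have hbk1 := aux_box_mem hst (show m+1 ≤ k+1 by omega) hk2
      set c := colT pt k with hc
      set c' := colT pt (k+1) with hc'
      have hcc : c ≤ c' := by
        have h2 := hnsd k
        simp only [inSD, not_and, not_lt] at h2
        exact h2 hk hk2
      rcases eq_or_lt_of_le hcc with heq | hlt
      · -- same column: row goes up by exactly one
        have hne : rowT pt k ≠ rowT pt (k+1) := by
          intro hr
          have : pt k = pt (k+1) := by
            have := Prod.ext hr heq
            simpa [rowT, colT] using this
          have := hst.2.1 k (Finset.mem_Icc.mpr ⟨hk, by omega⟩)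
            (k+1) (Finset.mem_Icc.mpr ⟨by omega, hk2⟩) this
          omega
        have hr1 : rowT pt k < rowT pt (k+1) := by
          rcases lt_or_ge (rowT pt (k+1)) (rowT pt k) with h | h
          · have := aux_colstd_lt hcs (show m+1 ≤ k+1 by omega) hk2 hk (by omega)
              heq.symm h
            omega
          · omega
        have hr2 : rowT pt (k+1) ≤ rowT pt k + 1 := by
          by_contra hgt
          push_neg at hgt
          obtain ⟨l, ⟨hl1, hl2⟩, hlr, hlc⟩ :=
            aux_box_occ hst hbk.1 (show mu c < rowT pt k + 1 by omega)
              (show rowT pt k + 1 ≤ lam c by rw [heq]; omega)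
          have hkl := aux_colstd_lt hcs hk (by omega) hl1 hl2 hlc.symm (by omega)
          have hlk1 := aux_colstd_lt hcs hl1 hl2 (show m+1 ≤ k+1 by omega) hk2
            (by rw [hlc, heq]) (by omega)
          omega
        rw [← heq]
        omega
      · -- new column: k at bottom of column c, k+1 at top of column c'
        have hrk : rowT pt k = lam c := by
          rcases eq_or_lt_of_le hbk.2.2 with h | h
          · exact h
          · exfalso
            obtain ⟨l, ⟨hl1, hl2⟩, hlr, hlc⟩ :=
              aux_box_occ hst hbk.1 (show mu c < rowT pt k + 1 by omega) (by omega)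
            have hkl := aux_colstd_lt hcs hk (by omega) hl1 hl2 hlc.symm (by omega)
            have := aux_col_mono hnsd (show m+1 ≤ k+1 by omega) (by omega : k+1 ≤ l) hl2
            omega
        have hrk1 : rowT pt (k+1) = mu c' + 1 := by
          obtain ⟨l, ⟨hl1, hl2⟩, hlr, hlc⟩ :=
            aux_box_occ hst hbk1.1 (show mu c' < mu c' + 1 by omega) (by omega)
          rcases lt_trichotomy (rowT pt l) (rowT pt (k+1)) with h | h | h
          · have hlk := aux_colstd_lt hcs hl1 hl2 (show m+1 ≤ k+1 by omega) hk2 hlc h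
            have := aux_col_mono hnsd hl1 (by omega : l ≤ k) (by omega)
            omega
          · omega
          · omega
        have hz : ∀ h, c < h → h < c' → lam h ≤ mu h := by
          intro h h1 h2
          by_contra hlth
          obtain ⟨l, ⟨hl1, hl2⟩, hlr, hlc⟩ :=
            aux_box_occ hst (show 1 ≤ h by omega) (show mu h < mu h + 1 by omega)
              (by omega)
          rcases le_or_gt l k with hle | hgt
          · have := aux_col_mono hnsd hl1 hle (by omega)
            omega
          · have := aux_col_mono hnsd (show m+1 ≤ k+1 by omega) (by omega : k+1 ≤ l) hl2
            omega
        have hS := aux_sum_split lam mu hbk.1 hlt hz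
        omega
end

section
/- Let λ be a partition of n written as (λ_1^{m_1}, …, λ_l^{m_l}) in exponential notation (distinct column lengths λ_1 > … > λ_l with multiplicities m_i), and let t be the standard skew tableau obtained from τ_λ by deleting the box containing 1 and subtracting 1 from every remaining entry. Then the box vacated by the jeu de taquin slide of t into the cell (1,1) is the box (λ_1, m_1). -/
namespace JdtAux

open Finset

lemma psum_zero (lam : ℕ → ℕ) : psum lam 0 = 0 := by simp [psum]

lemma psum_succ (lam : ℕ → ℕ) (j : ℕ) :
    psum lam (j + 1) = psum lam j + lam (j + 1) := by
  rw [psum, psum, Finset.sum_Icc_succ_top (by omega)]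

lemma psum_mono (lam : ℕ → ℕ) {i j : ℕ} (h : i ≤ j) : psum lam i ≤ psum lam j :=
  Finset.sum_le_sum_of_subset (Finset.Icc_subset_Icc_right h)

lemma downset (n : ℕ) (S : Finset ℕ) (hS : S ⊆ Finset.Icc 1 n)
    (hdc : ∀ j ∈ S, ∀ i, 1 ≤ i → i ≤ j → i ∈ S) : S = Finset.Icc 1 S.card := by
  rcases S.eq_empty_or_nonempty with h | h
  · simp [h]
  · have ht : S = Finset.Icc 1 (S.max' h) := by
      ext x
      simp only [Finset.mem_Icc]
      constructor
      · intro hx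
        exact ⟨(Finset.mem_Icc.mp (hS hx)).1, S.le_max' x hx⟩
      · intro hx
        exact hdc _ (S.max'_mem h) x hx.1 hx.2
    have hc : S.card = S.max' h := by
      conv_lhs => rw [ht]
      rw [Nat.card_Icc]; omega
    rw [hc]; exact ht

/-- Predicted hole position after `k` slide steps. -/
def myB (lam : ℕ → ℕ) (k : ℕ) : ℕ × ℕ :=
  if k + 1 ≤ lam 1 then (k + 1, 1) else (lam 1, k + 2 - lam 1)

/-- Predicted filling after `k` slide steps. -/
def myQ (lam : ℕ → ℕ) (p0 : ℕ → ℕ × ℕ) (k y : ℕ) : ℕ × ℕ :=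
  if y ≤ k ∧ y + 1 ≤ lam 1 then (y, 1)
  else if (y + 1) % lam 1 = 0 ∧ 2 ≤ (y + 1) / lam 1 ∧ (y + 1) / lam 1 + lam 1 ≤ k + 2
  then (lam 1, (y + 1) / lam 1 - 1)
  else p0 y

end JdtAux

open JdtAux in
/-- for `t = (τ_lam minus its box containing 1) - 1`, the jeu de
taquin slide into `(1,1)` vacates the box `(lam 1, m₁)`, where `m₁` is the
multiplicity of the longest column length `lam 1`. -/
theorem jdt_vacated_box (n : ℕ) (hn : 1 ≤ n) (lam : ℕ → ℕ)
    (hlam : IsPartition n lam)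
    (ptau : ℕ → ℕ × ℕ) (htau : IsSuperstandard lam n ptau)
    (p0 : ℕ → ℕ × ℕ) (hp0 : ∀ k, p0 k = ptau (k+1))
    (M : ℕ) (b : ℕ → ℕ × ℕ) (P : ℕ → ℕ → ℕ × ℕ)
    (hb0 : b 0 = (1, 1)) (hP0 : P 0 = p0)
    (hstep : ∀ k < M, SlideStep (n-1) (P k) (b k) (P (k+1)) (b (k+1)))
    (hnotrem : ∀ k < M, ¬ Removable lam (b k))
    (hrem : Removable lam (b M)) :
    b M = (lam 1, ((Finset.Icc 1 n).filter (fun j => lam j = lam 1)).card) := by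
  classical
  obtain ⟨⟨h00, N, hNz, hNs⟩, hdec⟩ := hlam
  obtain ⟨⟨hbox, hinj, hsurj⟩, hcolstd, hccol⟩ := htau
  -- basic facts about the partition
  have hpsum_n : ∀ j, N ≤ j → psum lam j = n := by
    intro j hj
    induction j with
    | zero => rw [← hNs]; congr 1; omega
    | succ j ih =>
      rcases Nat.lt_or_ge j N with h | h
      · rw [← hNs]; congr 1; omega
      · rw [psum_succ, ih h, hNz (j+1) (by omega)]
        omega
  have hpsum_le : ∀ j, psum lam j ≤ n := by
    intro j
    rcases Nat.le_total j N with h | h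
    · rw [← hNs]; exact psum_mono lam h
    · rw [hpsum_n j h]
  have hlamle : ∀ j, 1 ≤ j → lam j ≤ lam 1 := fun j hj => hdec 1 j le_rfl hj
  have hL1 : 1 ≤ lam 1 := by
    by_contra h
    have : psum lam N = 0 := Finset.sum_eq_zero (fun i hi => by
      have h1 := (Finset.mem_Icc.mp hi).1
      have := hlamle i h1
      omega)
    omega
  have hpsum1 : psum lam 1 = lam 1 := by
    have h := psum_succ lam 0
    rw [psum_zero] at h
    simpa using h
  have hLn : lam 1 ≤ n := by
    have h := hpsum_le 1
    rw [hpsum1] at h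
    exact h
  have hlam0 : ∀ j, n < j → lam j = 0 := by
    intro j hj
    have hn1 : lam (n+1) = 0 := by
      by_contra h
      have h1 : ∀ i ∈ Finset.Icc 1 (n+1), 1 ≤ lam i := by
        intro i hi
        obtain ⟨hi1, hi2⟩ := Finset.mem_Icc.mp hi
        have := hdec i (n+1) hi1 hi2
        omega
      have h2 : (n+1) ≤ psum lam (n+1) := by
        have h3 := Finset.card_nsmul_le_sum (Finset.Icc 1 (n+1)) lam 1 h1
        simp only [Nat.card_Icc, smul_eq_mul, mul_one] at h3
        have h4 : n + 1 + 1 - 1 = n + 1 := by omega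
        rw [h4] at h3
        exact h3
      have := hpsum_le (n+1); omega
    have := hdec (n+1) j (by omega) (by omega)
    omega
  -- basic facts about the superstandard tableau
  have hmem : ∀ k, 1 ≤ k → k ≤ n →
      1 ≤ (ptau k).2 ∧ 1 ≤ (ptau k).1 ∧ (ptau k).1 ≤ lam (ptau k).2 := by
    intro k h1 h2
    have h := hbox k (by simp only [Finset.mem_Icc]; omega)
    exact ⟨h.1, h.2.1, h.2.2⟩
  have hinj' : ∀ k l, 1 ≤ k → k ≤ n → 1 ≤ l → l ≤ n → ptau k = ptau l → k = l := by
    intro k l hk1 hk2 hl1 hl2 h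
    exact hinj k (by simp only [Finset.mem_Icc]; omega) l (by simp only [Finset.mem_Icc]; omega) h
  have hsurj' : ∀ r j, 1 ≤ j → 1 ≤ r → r ≤ lam j → ∃ k, 1 ≤ k ∧ k ≤ n ∧ ptau k = (r, j) := by
    intro r j hj hr1 hr2
    obtain ⟨k, hk, hpk⟩ := hsurj (r, j) hj hr1 hr2
    obtain ⟨hk1, hk2⟩ := Finset.mem_Icc.mp hk
    exact ⟨k, by omega, by omega, hpk⟩
  have hcs : ∀ k l, 1 ≤ k → k ≤ n → 1 ≤ l → l ≤ n →
      (ptau k).2 = (ptau l).2 → (ptau k).1 < (ptau l).1 → k < l := by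
    intro k l hk1 hk2 hl1 hl2 h1 h2
    exact hcolstd k (by simp only [Finset.mem_Icc]; omega) l (by simp only [Finset.mem_Icc]; omega) h1 h2
  have hccol' : ∀ k, 1 ≤ k → k + 1 ≤ n → (ptau k).2 ≤ (ptau (k+1)).2 := hccol
  have hcolmono : ∀ k l, 1 ≤ k → k ≤ l → l ≤ n → (ptau k).2 ≤ (ptau l).2 := by
    intro k l hk
    induction l with
    | zero => intro h1 h2; omega
    | succ l ih =>
      intro hkl hln
      rcases Nat.lt_or_ge l k with h | h
      · have hke : k = l + 1 := by omega
        rw [hke]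
      · exact le_trans (ih h (by omega)) (hccol' l (by omega) hln)
  have hrowmono : ∀ k l, 1 ≤ k → k ≤ n → 1 ≤ l → l ≤ n → k < l →
      (ptau k).2 = (ptau l).2 → (ptau k).1 < (ptau l).1 := by
    intro k l hk1 hk2 hl1 hl2 hkl hcol
    rcases Nat.lt_trichotomy (ptau k).1 (ptau l).1 with h | h | h
    · exact h
    · exfalso
      have heq : ptau k = ptau l := Prod.ext h hcol
      have := hinj' k l hk1 hk2 hl1 hl2 heq
      omega
    · exfalso
      have := hcs l k hl1 hl2 hk1 hk2 hcol.symm h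
      omega
  have hrowshift : ∀ a d, 1 ≤ a → a + d ≤ n → (ptau (a + d)).2 = (ptau a).2 →
      (ptau a).1 + d ≤ (ptau (a + d)).1 := by
    intro a d
    induction d with
    | zero => intro h1 h2 h3; simp
    | succ d ih =>
      intro h1 h2 h3
      rw [show a + (d+1) = a + d + 1 from rfl] at h2 h3 ⊢
      have hc2 : (ptau a).2 ≤ (ptau (a+d)).2 := hcolmono a (a+d) h1 (by omega) (by omega)
      have hc1 : (ptau (a+d)).2 ≤ (ptau (a+d+1)).2 := hccol' (a+d) (by omega) (by omega)
      have hcd : (ptau (a+d)).2 = (ptau a).2 := by omega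
      have h4 := ih h1 (by omega) hcd
      have h5 := hrowmono (a+d) (a+d+1) (by omega) (by omega) (by omega) (by omega) (by omega)
        (by rw [hcd, h3])
      omega
  have hcardcol : ∀ j, 1 ≤ j → ((Finset.Icc 1 n).filter (fun k => (ptau k).2 = j)).card = lam j := by
    intro j hj
    have hIccCard : (Finset.Icc 1 (lam j)).card = lam j := by rw [Nat.card_Icc]; omega
    rw [← hIccCard]
    apply Finset.card_bij (fun k _ => (ptau k).1)
    · intro a ha
      simp only [Finset.mem_filter, Finset.mem_Icc] at ha
      obtain ⟨⟨ha1, ha2⟩, hac⟩ := ha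
      have h := hmem a ha1 ha2
      simp only [Finset.mem_Icc]
      exact ⟨h.2.1, by rw [← hac]; exact h.2.2⟩
    · intro a ha b' hb' hab
      simp only [Finset.mem_filter, Finset.mem_Icc] at ha hb'
      exact hinj' a b' ha.1.1 ha.1.2 hb'.1.1 hb'.1.2 (Prod.ext hab (ha.2.trans hb'.2.symm))
    · intro r hr
      simp only [Finset.mem_Icc] at hr
      obtain ⟨k, hk1, hk2, hpk⟩ := hsurj' r j hj hr.1 hr.2
      refine ⟨k, ?_, ?_⟩
      · simp only [Finset.mem_filter, Finset.mem_Icc]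
        exact ⟨⟨hk1, hk2⟩, by rw [hpk]⟩
      · rw [hpk]
  have hTle : ∀ j, (Finset.Icc 1 n).filter (fun k => (ptau k).2 ≤ j) = Finset.Icc 1 (psum lam j) := by
    intro j
    have hsplit : (Finset.Icc 1 n).filter (fun k => (ptau k).2 ≤ j)
        = (Finset.Icc 1 j).biUnion (fun i => (Finset.Icc 1 n).filter (fun k => (ptau k).2 = i)) := by
      ext k
      simp only [Finset.mem_filter, Finset.mem_biUnion, Finset.mem_Icc]
      constructor
      · rintro ⟨⟨h1, h2⟩, h3⟩
        exact ⟨(ptau k).2, ⟨(hmem k h1 h2).1, h3⟩, ⟨h1, h2⟩, rfl⟩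
      · rintro ⟨i, ⟨hi1, hi2⟩, ⟨h1, h2⟩, h3⟩
        exact ⟨⟨h1, h2⟩, by omega⟩
    have hcard : ((Finset.Icc 1 n).filter (fun k => (ptau k).2 ≤ j)).card = psum lam j := by
      rw [hsplit, Finset.card_biUnion]
      · rw [psum]
        apply Finset.sum_congr rfl
        intro i hi
        exact hcardcol i (Finset.mem_Icc.mp hi).1
      · intro u hu v hv huv
        simp only [Finset.disjoint_left, Finset.mem_filter]
        rintro a ⟨-, ha⟩ ⟨-, hb⟩
        omega
    have hdcl : ∀ a ∈ (Finset.Icc 1 n).filter (fun k => (ptau k).2 ≤ j), ∀ i, 1 ≤ i → i ≤ a →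
        i ∈ (Finset.Icc 1 n).filter (fun k => (ptau k).2 ≤ j) := by
      intro a ha i hi1 hi2
      simp only [Finset.mem_filter, Finset.mem_Icc] at ha ⊢
      obtain ⟨⟨ha1, ha2⟩, ha3⟩ := ha
      exact ⟨⟨hi1, by omega⟩, le_trans (hcolmono i a hi1 hi2 ha2) ha3⟩
    have h := downset n _ (Finset.filter_subset _ _) hdcl
    rw [hcard] at h
    exact h
  have hcolle : ∀ k j, 1 ≤ k → k ≤ n → ((ptau k).2 ≤ j ↔ k ≤ psum lam j) := by
    intro k j hk1 hk2
    constructor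
    · intro h
      have hmem2 : k ∈ (Finset.Icc 1 n).filter (fun k => (ptau k).2 ≤ j) := by
        simp only [Finset.mem_filter, Finset.mem_Icc]; exact ⟨⟨hk1, hk2⟩, h⟩
      rw [hTle j] at hmem2
      exact (Finset.mem_Icc.mp hmem2).2
    · intro h
      have hmem2 : k ∈ Finset.Icc 1 (psum lam j) := Finset.mem_Icc.mpr ⟨hk1, h⟩
      rw [← hTle j] at hmem2
      exact (Finset.mem_filter.mp hmem2).2
  have hcolA : ∀ k, 1 ≤ k → k ≤ lam 1 → (ptau k).2 = 1 := by
    intro k hk1 hk2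
    have hkn : k ≤ n := le_trans hk2 hLn
    have h1 : (ptau k).2 ≤ 1 := (hcolle k 1 hk1 hkn).mpr (by rw [hpsum1]; exact hk2)
    have h2 := (hmem k hk1 hkn).1
    omega
  have hA : ∀ k, 1 ≤ k → k ≤ lam 1 → ptau k = (k, 1) := by
    intro k hk1 hk2
    have hkn : k ≤ n := le_trans hk2 hLn
    have hlow : (ptau 1).1 + (k - 1) ≤ (ptau k).1 := by
      have h := hrowshift 1 (k-1) le_rfl (by omega)
        (by rw [show 1 + (k-1) = k by omega, hcolA k hk1 hk2, hcolA 1 le_rfl hL1])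
      rw [show 1 + (k-1) = k by omega] at h
      exact h
    have hup : (ptau k).1 + (lam 1 - k) ≤ (ptau (lam 1)).1 := by
      have h := hrowshift k (lam 1 - k) hk1 (by omega)
        (by rw [show k + (lam 1 - k) = lam 1 by omega, hcolA (lam 1) hL1 le_rfl, hcolA k hk1 hk2])
      rw [show k + (lam 1 - k) = lam 1 by omega] at h
      exact h
    have h1 := (hmem 1 le_rfl (by omega)).2.1
    have hL := (hmem (lam 1) hL1 hLn).2.2
    rw [hcolA (lam 1) hL1 le_rfl] at hL
    have hrow : (ptau k).1 = k := by omega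
    exact Prod.ext hrow (hcolA k hk1 hk2)
  -- the multiplicity m of the longest column
  set m := ((Finset.Icc 1 n).filter (fun j => lam j = lam 1)).card with hmdef
  have hfe : (Finset.Icc 1 n).filter (fun j => lam j = lam 1) = Finset.Icc 1 m := by
    rw [hmdef]
    exact downset n _ (Finset.filter_subset _ _) (by
      intro a ha i hi1 hi2
      simp only [Finset.mem_filter, Finset.mem_Icc] at ha ⊢
      refine ⟨⟨hi1, by omega⟩, ?_⟩
      have h1 := hdec i a hi1 hi2
      have h2 := hlamle i hi1
      omega)
  have hm1 : 1 ≤ m := by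
    have h1 : (1:ℕ) ∈ (Finset.Icc 1 n).filter (fun j => lam j = lam 1) := by
      simp only [Finset.mem_filter, Finset.mem_Icc]; exact ⟨⟨le_rfl, hn⟩, trivial⟩
    rw [hfe] at h1
    exact (Finset.mem_Icc.mp h1).2
  have hm2 : ∀ j, 1 ≤ j → j ≤ m → lam j = lam 1 := by
    intro j h1 h2
    have h3 : j ∈ Finset.Icc 1 m := Finset.mem_Icc.mpr ⟨h1, h2⟩
    rw [← hfe] at h3
    exact (Finset.mem_filter.mp h3).2
  have hm3 : ∀ j, m < j → lam j < lam 1 := by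
    intro j hj
    rcases Nat.lt_or_ge n j with h | h
    · have := hlam0 j h
      omega
    · have h1 : 1 ≤ j := by omega
      have h2 : j ∉ Finset.Icc 1 m := by simp only [Finset.mem_Icc]; omega
      rw [← hfe] at h2
      simp only [Finset.mem_filter, Finset.mem_Icc] at h2
      have h3 := hlamle j h1
      omega
  have hpsum_mul : ∀ c, c ≤ m → psum lam c = c * lam 1 := by
    intro c
    induction c with
    | zero => intro _; rw [psum_zero]; ring
    | succ c ih =>
      intro h
      rw [psum_succ, ih (by omega), hm2 (c+1) (by omega) h]
      ring
  have hB : ∀ c, 1 ≤ c → c ≤ m → ptau (psum lam c) = (lam 1, c) := by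
    intro c hc1 hc2
    have hlc : lam c = lam 1 := hm2 c hc1 hc2
    have hps : psum lam c = psum lam (c-1) + lam 1 := by
      conv_lhs => rw [show c = c - 1 + 1 by omega]
      rw [psum_succ, show c - 1 + 1 = c by omega, hlc]
    have hK1 : 1 ≤ psum lam c := by omega
    have hKn : psum lam c ≤ n := hpsum_le c
    have hcol : (ptau (psum lam c)).2 = c := by
      have hup : (ptau (psum lam c)).2 ≤ c := (hcolle _ c hK1 hKn).mpr le_rfl
      have hlow : ¬ ((ptau (psum lam c)).2 ≤ c - 1) := by
        intro hcon
        have h := (hcolle (psum lam c) (c-1) hK1 hKn).mp hcon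
        have h2 := psum_mono lam (show c - 1 ≤ c by omega)
        omega
      have := (hmem _ hK1 hKn).1
      omega
    have hcolmid : (ptau (psum lam (c-1) + 1)).2 = c := by
      have h1 : 1 ≤ psum lam (c-1) + 1 := by omega
      have h2 : psum lam (c-1) + 1 ≤ n := by omega
      have hup : (ptau (psum lam (c-1) + 1)).2 ≤ c := (hcolle _ c h1 h2).mpr (by omega)
      have hlow : ¬ ((ptau (psum lam (c-1) + 1)).2 ≤ c - 1) := by
        intro hcon
        have h := (hcolle (psum lam (c-1) + 1) (c-1) h1 h2).mp hcon
        omega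
      have := (hmem _ h1 h2).1
      omega
    have heq : psum lam (c-1) + 1 + (lam 1 - 1) = psum lam c := by omega
    have hshift := hrowshift (psum lam (c-1) + 1) (lam 1 - 1) (by omega) (by rw [heq]; exact hKn)
      (by rw [heq, hcol, hcolmid])
    rw [heq] at hshift
    have hr1 := (hmem (psum lam (c-1) + 1) (by omega) (by omega)).2.1
    have hr2 := (hmem (psum lam c) hK1 hKn).2.2
    rw [hcol, hlc] at hr2
    have hrow : (ptau (psum lam c)).1 = lam 1 := by omega
    exact Prod.ext hrow hcol
  -- the main invariant
  have hInv : ∀ k, k ≤ M → k ≤ lam 1 + m - 2 →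
      (b k = myB lam k ∧ ∀ y, 1 ≤ y → y ≤ n - 1 → P k y = myQ lam p0 k y) := by
    intro k
    induction k with
    | zero =>
      intro _ _
      constructor
      · rw [hb0]
        simp only [myB]
        rw [if_pos (show 0 + 1 ≤ lam 1 by omega)]
      · intro y hy1 hy2
        rw [hP0]
        simp only [myQ]
        rw [if_neg (by omega), if_neg (by rintro ⟨-, h2, h3⟩; omega)]
    | succ k ih =>
      intro hkM hkK
      obtain ⟨hbk, hPk⟩ := ih (by omega) (by omega)
      obtain ⟨x, hx1, hxn, hpx, hbor, hmin, hupd⟩ := hstep k (by omega)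
      by_cases hph : k + 2 ≤ lam 1
      · -- phase 1 : hole moves down the first column
        have hbk1 : b k = (k+1, 1) := by
          rw [hbk]; simp only [myB]; rw [if_pos (by omega)]
        rw [hbk1] at hbor hmin
        have hdownP : P k (k+1) = (k+2, 1) := by
          rw [hPk (k+1) (by omega) (by omega)]
          simp only [myQ]
          rw [if_neg (by omega), if_neg (by rintro ⟨-, h2, h3⟩; omega), hp0]
          exact hA (k+2) (by omega) hph
        have hxle : x ≤ k + 1 := hmin (k+1) (by omega) (by omega) (Or.inl hdownP)
        have hbnew : b (k+1) = (k+2, 1) := by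
          rcases hbor with h | h
          · rw [h]
          · exfalso
            rw [h] at hpx
            have hpx' : P k x = (k+1, 2) := hpx
            rw [hPk x hx1 hxn] at hpx'
            simp only [myQ] at hpx'
            split_ifs at hpx' with h1 h2
            · rw [Prod.mk.injEq] at hpx'
              omega
            · rw [Prod.mk.injEq] at hpx'
              omega
            · rw [hp0] at hpx'
              have hx2 : x + 1 ≤ lam 1 := by omega
              rw [hA (x+1) (by omega) hx2, Prod.mk.injEq] at hpx'
              omega
        have hxval : x = k + 1 := by
          have hpx' : P k x = (k+2, 1) := by rw [← hbnew]; exact hpx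
          rw [hPk x hx1 hxn] at hpx'
          simp only [myQ] at hpx'
          split_ifs at hpx' with h1 h2
          · rw [Prod.mk.injEq] at hpx'
            omega
          · obtain ⟨hq0, hq2, hq3⟩ := h2
            omega
          · rw [hp0] at hpx'
            have h := hinj' (x+1) (k+2) (by omega) (by omega) (by omega) (by omega)
              (by rw [hpx', hA (k+2) (by omega) hph])
            omega
        constructor
        · rw [hbnew]; simp only [myB]; rw [if_pos (by omega)]
        · intro y hy1 hy2
          rw [hupd y]
          by_cases hyx : y = x
          · rw [if_pos hyx, hbk1]
            have hyk : y = k + 1 := by omega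
            rw [hyk]
            simp only [myQ]
            rw [if_pos ⟨le_rfl, by omega⟩]
          · rw [if_neg hyx, hPk y hy1 hy2]
            simp only [myQ]
            have hc1iff : (y ≤ k ∧ y + 1 ≤ lam 1) ↔ (y ≤ k + 1 ∧ y + 1 ≤ lam 1) := by omega
            have hc2iff : ((y+1) % lam 1 = 0 ∧ 2 ≤ (y+1) / lam 1 ∧ (y+1) / lam 1 + lam 1 ≤ k + 2)
                ↔ ((y+1) % lam 1 = 0 ∧ 2 ≤ (y+1) / lam 1 ∧ (y+1) / lam 1 + lam 1 ≤ k + 1 + 2) := by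
              constructor
              · rintro ⟨a, b', c⟩; exact ⟨a, b', by omega⟩
              · rintro ⟨a, b', c⟩; exact ⟨a, b', by omega⟩
            exact if_congr hc1iff rfl (if_congr hc2iff rfl rfl)
      · -- phase 2 : hole moves right along the bottom row
        have hc1 : 1 ≤ k + 2 - lam 1 := by omega
        have hcm : k + 2 - lam 1 + 1 ≤ m := by omega
        have hbk1 : b k = (lam 1, k + 2 - lam 1) := by
          rw [hbk]; simp only [myB]
          by_cases h : k + 1 ≤ lam 1
          · rw [if_pos h]
            have h2 : k + 2 - lam 1 = 1 := by omega
            have h3 : k + 1 = lam 1 := by omega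
            rw [h2, ← h3]
          · rw [if_neg h]
        rw [hbk1] at hbor hmin
        have hnodown : ∀ y, 1 ≤ y → y ≤ n - 1 → P k y ≠ (lam 1 + 1, k + 2 - lam 1) := by
          intro y h1 h2 hcon
          rw [hPk y h1 h2] at hcon
          simp only [myQ] at hcon
          split_ifs at hcon with hca hcb
          · rw [Prod.mk.injEq] at hcon
            omega
          · rw [Prod.mk.injEq] at hcon
            omega
          · rw [hp0] at hcon
            have hv := (hmem (y+1) (by omega) (by omega)).2.2
            rw [hcon] at hv
            simp only at hv
            have := hlamle (k + 2 - lam 1) hc1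
            omega
        have hbnew : b (k+1) = (lam 1, k + 2 - lam 1 + 1) := by
          rcases hbor with h | h
          · exact absurd (h ▸ hpx) (hnodown x hx1 hxn)
          · rw [h]
        have hps1 : 1 ≤ psum lam (k + 2 - lam 1 + 1) := by
          have h := psum_mono lam (show 1 ≤ k + 2 - lam 1 + 1 by omega)
          rw [hpsum1] at h
          omega
        have hxval : x + 1 = psum lam (k + 2 - lam 1 + 1) := by
          have hpx' : P k x = (lam 1, k + 2 - lam 1 + 1) := by rw [← hbnew]; exact hpx
          rw [hPk x hx1 hxn] at hpx'
          simp only [myQ] at hpx'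
          split_ifs at hpx' with hca hcb
          · rw [Prod.mk.injEq] at hpx'
            omega
          · rw [Prod.mk.injEq] at hpx'
            obtain ⟨hq0, hq2, hq3⟩ := hcb
            omega
          · rw [hp0] at hpx'
            exact hinj' (x+1) (psum lam (k + 2 - lam 1 + 1)) (by omega) (by omega) hps1
              (hpsum_le _) (by rw [hpx', hB (k + 2 - lam 1 + 1) (by omega) hcm])
        have hxmul : x + 1 = (k + 2 - lam 1 + 1) * lam 1 := by
          rw [hxval]; exact hpsum_mul _ hcm
        constructor
        · rw [hbnew]; simp only [myB]; rw [if_neg (by omega)]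
          have h : k + 2 - lam 1 + 1 = k + 1 + 2 - lam 1 := by omega
          rw [h]
        · intro y hy1 hy2
          rw [hupd y]
          by_cases hyx : y = x
          · rw [if_pos hyx, hbk1, hyx]
            have hdiv : (x+1) / lam 1 = k + 2 - lam 1 + 1 := by
              rw [hxmul]; exact Nat.mul_div_cancel _ (by omega)
            have hmod : (x+1) % lam 1 = 0 := by
              rw [hxmul]; exact Nat.mul_mod_left _ _
            have h2L : 2 * lam 1 ≤ (k + 2 - lam 1 + 1) * lam 1 :=
              Nat.mul_le_mul_right _ (by omega)
            simp only [myQ]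
            rw [if_neg (by omega), if_pos ⟨hmod, by omega, by omega⟩, hdiv]
            rw [Nat.add_sub_cancel]
          · rw [if_neg hyx, hPk y hy1 hy2]
            simp only [myQ]
            have hc1iff : (y ≤ k ∧ y + 1 ≤ lam 1) ↔ (y ≤ k + 1 ∧ y + 1 ≤ lam 1) := by omega
            have hc2iff : ((y+1) % lam 1 = 0 ∧ 2 ≤ (y+1) / lam 1 ∧ (y+1) / lam 1 + lam 1 ≤ k + 2)
                ↔ ((y+1) % lam 1 = 0 ∧ 2 ≤ (y+1) / lam 1 ∧ (y+1) / lam 1 + lam 1 ≤ k + 1 + 2) := by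
              constructor
              · rintro ⟨a, b', c⟩; exact ⟨a, b', by omega⟩
              · rintro ⟨ha, hb, hc⟩
                refine ⟨ha, hb, ?_⟩
                by_contra hcon
                have hq : (y+1) / lam 1 = k + 2 - lam 1 + 1 := by omega
                have hy' : (y+1) / lam 1 * lam 1 = y + 1 :=
                  Nat.div_mul_cancel (Nat.dvd_of_mod_eq_zero ha)
                rw [hq] at hy'
                omega
            exact if_congr hc1iff rfl (if_congr hc2iff rfl rfl)
  -- removability characterization
  have hR1 : ∀ k, k < lam 1 + m - 2 → ¬ Removable lam (myB lam k) := by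
    intro k hk
    simp only [myB]
    by_cases h : k + 1 ≤ lam 1
    · rw [if_pos h]
      intro hcon
      have h2' : k + 1 = lam 1 := hcon.2.1
      have h3' : lam 2 < k + 1 := hcon.2.2
      rcases Nat.lt_or_ge m 2 with hm | hm
      · omega
      · have := hm2 2 (by omega) hm
        omega
    · rw [if_neg h]
      intro hcon
      have h2' : lam 1 = lam (k + 2 - lam 1) := hcon.2.1
      have h3' : lam (k + 2 - lam 1 + 1) < lam 1 := hcon.2.2
      have hcc : k + 2 - lam 1 + 1 ≤ m := by omega
      have := hm2 (k + 2 - lam 1 + 1) (by omega) hcc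
      omega
  have hR2 : Removable lam (myB lam (lam 1 + m - 2)) := by
    simp only [myB]
    by_cases h : lam 1 + m - 2 + 1 ≤ lam 1
    · rw [if_pos h]
      have hm' : m = 1 := by omega
      refine ⟨le_rfl, ?_, ?_⟩
      · show lam 1 + m - 2 + 1 = lam 1
        omega
      · show lam 2 < lam 1 + m - 2 + 1
        have := hm3 2 (by omega)
        omega
    · rw [if_neg h]
      have hcol : lam 1 + m - 2 + 2 - lam 1 = m := by omega
      rw [hcol]
      refine ⟨hm1, (hm2 m hm1 le_rfl).symm, ?_⟩
      show lam (m + 1) < lam 1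
      exact hm3 (m+1) (by omega)
  -- conclude
  have hMK : M = lam 1 + m - 2 := by
    rcases Nat.lt_trichotomy M (lam 1 + m - 2) with h | h | h
    · exfalso
      obtain ⟨hbM, -⟩ := hInv M le_rfl (by omega)
      exact hR1 M h (by rw [← hbM]; exact hrem)
    · exact h
    · exfalso
      obtain ⟨hbK, -⟩ := hInv (lam 1 + m - 2) (by omega) le_rfl
      exact hnotrem _ h (by rw [hbK]; exact hR2)
  obtain ⟨hbM, -⟩ := hInv M le_rfl (by omega)
  rw [hbM, hMK]
  simp only [myB]
  by_cases h : lam 1 + m - 2 + 1 ≤ lam 1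
  · rw [if_pos h]
    refine Prod.ext ?_ ?_
    · show lam 1 + m - 2 + 1 = lam 1
      omega
    · show (1:ℕ) = m
      omega
  · rw [if_neg h]
    refine Prod.ext rfl ?_
    show lam 1 + m - 2 + 2 - lam 1 = m
    omega
end

section
/- Let u, t be standard tableaux with n boxes (of possibly different shapes) such that the restriction number of (u,t) is n−1 and D(u) = D(t) ∪ {n−1} with n−1 ∉ D(t). Then col_u(n) < col_t(n), shape(u) < shape(t) in dominance order, and u < t in the extended dominance order. -/
/-- The full restriction of a straight-shape tableau recovers the shape. -/
lemma resShape_full (lam : ℕ → ℕ) (n : ℕ) (p : ℕ → ℕ × ℕ)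
    (h : IsTab lam n p) (j : ℕ) (hj : 1 ≤ j) :
    resShape p n j = lam j := by
  obtain ⟨hbox, hinj, hsurj⟩ := h
  unfold resShape
  have : (Finset.Icc 1 (lam j)).card = lam j := by
    rw [Nat.card_Icc]; omega
  rw [← this]
  apply Finset.card_bij (fun k _ => (p k).1)
  · intro k hk
    simp only [Finset.mem_filter, Finset.mem_Icc] at hk
    have hb := hbox k (by simp [Finset.mem_Icc]; omega)
    have hc : (p k).2 = j := hk.2
    simp only [Finset.mem_Icc]
    constructor
    · omega
    · rw [← hc]; exact hb.2.2
  · intro k hk l hl hkl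
    simp only [Finset.mem_filter, Finset.mem_Icc] at hk hl
    apply hinj k (by simp [Finset.mem_Icc]; omega) l (by simp [Finset.mem_Icc]; omega)
    have : colT p k = colT p l := hk.2.trans hl.2.symm
    unfold colT at this
    exact Prod.ext hkl this
  · intro r hr
    simp only [Finset.mem_Icc] at hr
    obtain ⟨k, hk, hpk⟩ := hsurj (r, j) hj (by show 0 < r; omega) (by simpa using hr.2)
    refine ⟨k, ?_, by rw [hpk]⟩
    simp only [Finset.mem_filter, Finset.mem_Icc] at hk ⊢
    exact ⟨by omega, by unfold colT; rw [hpk]⟩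

/-- Adding the last entry to a restriction. -/
lemma resShape_succ (p : ℕ → ℕ × ℕ) (n j : ℕ) (hn : 1 ≤ n) :
    resShape p n j = resShape p (n-1) j + (if colT p n = j then 1 else 0) := by
  unfold resShape
  have hIcc : Finset.Icc 1 n = insert n (Finset.Icc 1 (n-1)) := by
    ext x; simp only [Finset.mem_insert, Finset.mem_Icc]; omega
  rw [hIcc, Finset.filter_insert]
  by_cases h : colT p n = j
  · rw [if_pos h, if_pos h, Finset.card_insert_of_notMem (by simp [Finset.mem_Icc]; omega)]
  · rw [if_neg h, if_neg h, add_zero]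

lemma psum_add_indicator (g : ℕ → ℕ) (c k : ℕ) :
    psum (fun j => g j + (if c = j then 1 else 0)) k
      = psum g k + (if c ∈ Finset.Icc 1 k then 1 else 0) := by
  unfold psum
  rw [Finset.sum_add_distrib, Finset.sum_ite_eq]

/-- if the restriction number of `(u,t)` is `n-1` and
`D(u) = D(t) ∪ {n-1}` with `n-1 ∉ D(t)`, then `col_u(n) < col_t(n)`,
`shape(u) < shape(t)` in dominance order, and `u < t` in the extended
dominance order. -/
theorem nminus1_restricted_order (n : ℕ) (mu lam : ℕ → ℕ)
    (hmu : IsPartition n mu) (hlam : IsPartition n lam)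
    (pu pt : ℕ → ℕ × ℕ) (hu : IsStd mu n pu) (ht : IsStd lam n pt)
    (hres : RestNum n pu pt (n-1))
    (hDu : inD 0 n pu (n-1)) (hDt : ¬ inD 0 n pt (n-1))
    (hDeq : ∀ i, i ≠ n - 1 → (inD 0 n pu i ↔ inD 0 n pt i)) :
    colT pu n < colT pt n ∧ (Dominates lam mu ∧ mu ≠ lam) ∧
      (ExtDomLe n pu pt ∧ ∃ m ∈ Finset.Icc 1 n, pu m ≠ pt m) := by
  obtain ⟨hDu1, hDu2, hDu3⟩ := hDu
  have hn2 : 2 ≤ n := by omega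
  have hsn : n - 1 + 1 = n := by omega
  rw [hsn] at hDu3
  -- agreement on entries ≤ n-1
  have hagree : ∀ k, 1 ≤ k → k ≤ n - 1 → pu k = pt k := hres.2.1
  have hne : pu n ≠ pt n := by
    rcases hres.2.2 with h | h
    · omega
    · rwa [hsn] at h
  -- strict descent facts
  have hcu1 : colT pu n ≤ colT pu (n-1) := hDu3
  have hcut : colT pu (n-1) = colT pt (n-1) := by
    unfold colT; rw [hagree (n-1) (by omega) le_rfl]
  have hct : colT pt (n-1) < colT pt n := by
    by_contra hcon
    exact hDt ⟨by omega, by omega, by rw [hsn]; omega⟩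
  have hmain : colT pu n < colT pt n := by omega
  -- columns are positive
  have hcu_pos : 1 ≤ colT pu n :=
    (hu.1.1 n (by simp [Finset.mem_Icc]; omega)).1
  -- restriction shapes agree at n-1
  have hresag : ∀ j, resShape pu (n-1) j = resShape pt (n-1) j := by
    intro j
    unfold resShape
    congr 1
    apply Finset.filter_congr
    intro k hk
    simp only [Finset.mem_Icc] at hk
    unfold colT
    rw [hagree k hk.1 hk.2]
  -- psum comparison at level n
  have hpsum_n : ∀ k, psum (fun j => resShape pt n j) k ≤ psum (fun j => resShape pu n j) k := by
    intro k
    have hu_eq : (fun j => resShape pu n j)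
        = fun j => resShape pu (n-1) j + (if colT pu n = j then 1 else 0) := by
      funext j; exact resShape_succ pu n j (by omega)
    have ht_eq : (fun j => resShape pt n j)
        = fun j => resShape pu (n-1) j + (if colT pt n = j then 1 else 0) := by
      funext j; rw [resShape_succ pt n j (by omega), hresag j]
    rw [hu_eq, ht_eq, psum_add_indicator, psum_add_indicator]
    have : (if colT pt n ∈ Finset.Icc 1 k then 1 else 0)
        ≤ (if colT pu n ∈ Finset.Icc 1 k then 1 else 0) := by
      simp only [Finset.mem_Icc]
      split_ifs with h1 h2 <;> omega
    omega
  -- shapes are the full restrictions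
  have hmu_res : ∀ j, 1 ≤ j → resShape pu n j = mu j :=
    fun j hj => resShape_full mu n pu hu.1 j hj
  have hlam_res : ∀ j, 1 ≤ j → resShape pt n j = lam j :=
    fun j hj => resShape_full lam n pt ht.1 j hj
  refine ⟨hmain, ⟨?_, ?_⟩, ?_, n, by simp [Finset.mem_Icc]; omega, hne⟩
  · -- Dominates lam mu
    intro k
    have h1 : psum lam k = psum (fun j => resShape pt n j) k := by
      unfold psum
      apply Finset.sum_congr rfl
      intro j hj
      simp only [Finset.mem_Icc] at hj
      exact (hlam_res j hj.1).symm
    have h2 : psum mu k = psum (fun j => resShape pu n j) k := by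
      unfold psum
      apply Finset.sum_congr rfl
      intro j hj
      simp only [Finset.mem_Icc] at hj
      exact (hmu_res j hj.1).symm
    rw [h1, h2]
    exact hpsum_n k
  · -- mu ≠ lam
    intro heq
    have h1 : resShape pu n (colT pu n) = resShape pu (n-1) (colT pu n) + 1 := by
      rw [resShape_succ pu n _ (by omega), if_pos rfl]
    have h2 : resShape pt n (colT pu n) = resShape pu (n-1) (colT pu n) := by
      rw [resShape_succ pt n _ (by omega), hresag,
        if_neg (by omega), add_zero]
    have := hmu_res (colT pu n) hcu_pos
    have := hlam_res (colT pu n) hcu_pos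
    rw [heq] at *
    omega
  · -- ExtDomLe
    intro m hm
    simp only [Finset.mem_Icc] at hm
    rcases Nat.lt_or_ge m n with hmn | hmn
    · -- m ≤ n-1 : restrictions coincide
      intro k
      have : ∀ j, resShape pu m j = resShape pt m j := by
        intro j
        unfold resShape
        congr 1
        apply Finset.filter_congr
        intro x hx
        simp only [Finset.mem_Icc] at hx
        unfold colT
        rw [hagree x hx.1 (by omega)]
      unfold psum
      exact le_of_eq (Finset.sum_congr rfl fun j _ => (this j).symm)
    · have : m = n := by omega
      subst this
      exact hpsum_n
end
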